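/- Let A be an abelian category, let t₁ = (T₁,F₁) and t₂ = (T₂,F₂) be torsion pairs in A with T₁ ⊆ T₂, and set H = T₂ ∩ F₁. Then the maps Φ(T,F) = (T ∩ F₁, T₂ ∩ F) and Ψ(X,Y) = (T₁∗X, Y∗F₂) are mutually inverse, order-preserving bijections between the set of torsion pairs (T,F) in A with T₁ ⊆ T ⊆ T₂ (ordered by inclusion of the first components) and the set of torsion pairs in H (ordered by inclusion of the first components). Here T₁∗X is the class of objects M admitting a short exact sequence 0 → U → M → X → 0 with U ∈ T₁ and X ∈ X, and Y∗F₂ is the class of objects M admitting a short exact sequence 0 → Y → M → V → 0 with Y ∈ Y and V ∈ F₂. -/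

import Mathlib

open CategoryTheory Limits ZeroObject

universe v u

variable (A : Type u) [Category.{v} A] [Abelian A]

/-- A class of objects closed under isomorphisms. -/
def IsoClosed (S : Set A) : Prop := ∀ ⦃X Y : A⦄, (X ≅ Y) → X ∈ S → Y ∈ S

/-- `f`, `g` form a short exact sequence `0 → X → Y → Z → 0`. -/
def IsSES {X Y Z : A} (f : X ⟶ Y) (g : Y ⟶ Z) : Prop :=
  ∃ w : f ≫ g = 0, (ShortComplex.mk f g w).ShortExact

/-- A torsion pair in the abelian category `A`: a pair of iso-closed classes with
`Hom(T, F) = 0` such that every object sits in a short exact sequence with kernel in `T`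
and cokernel in `F`. -/
def IsTorsionPair (T F : Set A) : Prop :=
  IsoClosed A T ∧ IsoClosed A F ∧
  (∀ X ∈ T, ∀ Y ∈ F, ∀ f : X ⟶ Y, f = 0) ∧
  (∀ M : A, ∃ (X Y : A) (f : X ⟶ M) (g : M ⟶ Y), IsSES A f g ∧ X ∈ T ∧ Y ∈ F)

/-- `star X Y` is the class of objects `M` admitting a short exact sequence
`0 → B → M → C → 0` with `B ∈ X` and `C ∈ Y`. -/
def star (X Y : Set A) : Set A :=
  {M : A | ∃ (B C : A) (f : B ⟶ M) (g : M ⟶ C), IsSES A f g ∧ B ∈ X ∧ C ∈ Y}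

/-- A torsion pair in a class `H` of objects of `A`: a pair of iso-closed subclasses
`(X, Y)` of `H` such that `Hom(X, Y) = 0` and every object of `H` sits in a short exact
sequence with kernel in `X` and cokernel in `Y`. -/
def IsTorsionPairIn (H X Y : Set A) : Prop :=
  X ⊆ H ∧ Y ⊆ H ∧ IsoClosed A X ∧ IsoClosed A Y ∧
  (∀ B ∈ X, ∀ C ∈ Y, ∀ f : B ⟶ C, f = 0) ∧
  (∀ H₀ ∈ H, ∃ (B C : A) (f : B ⟶ H₀) (g : H₀ ⟶ C),
    IsSES A f g ∧ B ∈ X ∧ C ∈ Y)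

variable {A}


-- basic facts about IsSES
lemma IsSES.w {X Y Z : A} {f : X ⟶ Y} {g : Y ⟶ Z} (h : IsSES A f g) : f ≫ g = 0 := h.1

lemma IsSES.mono {X Y Z : A} {f : X ⟶ Y} {g : Y ⟶ Z} (h : IsSES A f g) : Mono f :=
  h.2.mono_f

lemma IsSES.epi {X Y Z : A} {f : X ⟶ Y} {g : Y ⟶ Z} (h : IsSES A f g) : Epi g :=
  h.2.epi_g

lemma IsSES.desc {X Y Z W : A} {f : X ⟶ Y} {g : Y ⟶ Z} (h : IsSES A f g)
    (φ : Y ⟶ W) (hφ : f ≫ φ = 0) : ∃ χ : Z ⟶ W, g ≫ χ = φ := by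
  obtain ⟨w, hse⟩ := h
  have := hse.epi_g
  exact hse.exact.desc' φ hφ

lemma IsSES.lift {X Y Z W : A} {f : X ⟶ Y} {g : Y ⟶ Z} (h : IsSES A f g)
    (φ : W ⟶ Y) (hφ : φ ≫ g = 0) : ∃ ψ : W ⟶ X, ψ ≫ f = φ := by
  obtain ⟨w, hse⟩ := h
  have := hse.mono_f
  exact hse.exact.lift' φ hφ

/-- transport an SES along an iso of the middle object -/
lemma IsSES.iso_mid {X Y Z Y' : A} {f : X ⟶ Y} {g : Y ⟶ Z} (h : IsSES A f g) (e : Y ≅ Y') :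
    IsSES A (f ≫ e.hom) (e.inv ≫ g) := by
  obtain ⟨w, hse⟩ := h
  refine ⟨by simp [reassoc_of% w, w], ?_⟩
  exact ShortComplex.shortExact_of_iso
    (ShortComplex.isoMk (Iso.refl X) e (Iso.refl Z) (by simp) (by simp)) hse

lemma isSES_of_iso {X Y : A} (e : X ≅ Y) : IsSES A e.hom (0 : Y ⟶ (0 : A)) := by
  refine ⟨by simp, ?_⟩
  exact ShortComplex.Splitting.shortExact
    { r := e.inv, s := 0,
      f_r := by simp, s_g := by apply (isZero_zero A).eq_of_src,
      id := by simp }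

lemma isSES_of_iso' {X Y : A} (e : X ≅ Y) : IsSES A (0 : (0 : A) ⟶ X) e.hom := by
  refine ⟨by simp, ?_⟩
  exact ShortComplex.Splitting.shortExact
    { r := 0, s := e.inv,
      f_r := by apply (isZero_zero A).eq_of_src, s_g := by simp,
      id := by simp }

lemma ses_cokernel {P M : A} (c : P ⟶ M) [Mono c] : IsSES A c (cokernel.π c) := by
  refine ⟨cokernel.condition c, ShortComplex.ShortExact.mk' ?_ inferInstance inferInstance⟩
  exact ShortComplex.exact_of_g_is_cokernel _ (cokernelIsCokernel c)

lemma ses_kernel {M N : A} (c : M ⟶ N) [Epi c] : IsSES A (kernel.ι c) c := by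
  refine ⟨kernel.condition c, ShortComplex.ShortExact.mk' ?_ inferInstance inferInstance⟩
  exact ShortComplex.exact_of_f_is_kernel _ (kernelIsKernel c)

section TP
variable {A : Type u} [Category.{v} A] [Abelian A] {T F : Set A}

lemma mem_right_of (h : IsTorsionPair A T F) (Y : A)
    (hY : ∀ X ∈ T, ∀ f : X ⟶ Y, f = 0) : Y ∈ F := by
  obtain ⟨X, Y', f, g, ⟨w, hse⟩, hX, hY'⟩ := h.2.2.2 Y
  have hf : f = 0 := hY X hX f
  have : Mono g := hse.exact.mono_g hf
  have := hse.epi_g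
  have : IsIso g := isIso_of_mono_of_epi g
  exact h.2.1 (asIso g).symm hY'

lemma mem_left_of (h : IsTorsionPair A T F) (X : A)
    (hX : ∀ Y ∈ F, ∀ f : X ⟶ Y, f = 0) : X ∈ T := by
  obtain ⟨X', Y, f, g, ⟨w, hse⟩, hX', hY⟩ := h.2.2.2 X
  have hg : g = 0 := hX Y hY g
  have : Epi f := hse.exact.epi_f hg
  have := hse.mono_f
  have : IsIso f := isIso_of_mono_of_epi f
  exact h.1 (asIso f) hX'

lemma left_quot (h : IsTorsionPair A T F) {M N : A} (e : M ⟶ N) [Epi e]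
    (hM : M ∈ T) : N ∈ T := by
  refine mem_left_of h N (fun Y hY f => ?_)
  have : e ≫ f = 0 := h.2.2.1 M hM Y hY _
  rwa [← cancel_epi e, comp_zero]

lemma right_sub (h : IsTorsionPair A T F) {M N : A} (m : M ⟶ N) [Mono m]
    (hN : N ∈ F) : M ∈ F := by
  refine mem_right_of h M (fun X hX f => ?_)
  have : f ≫ m = 0 := h.2.2.1 X hX N hN _
  rwa [← cancel_mono m, zero_comp]

lemma left_ext (h : IsTorsionPair A T F) {B M C : A} {f : B ⟶ M} {g : M ⟶ C}
    (hse : IsSES A f g) (hB : B ∈ T) (hC : C ∈ T) : M ∈ T := by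
  refine mem_left_of h M (fun Y hY φ => ?_)
  obtain ⟨χ, hχ⟩ := hse.desc φ (h.2.2.1 B hB Y hY _)
  rw [← hχ, h.2.2.1 C hC Y hY χ, comp_zero]

lemma right_ext (h : IsTorsionPair A T F) {B M C : A} {f : B ⟶ M} {g : M ⟶ C}
    (hse : IsSES A f g) (hB : B ∈ F) (hC : C ∈ F) : M ∈ F := by
  refine mem_right_of h M (fun X hX φ => ?_)
  obtain ⟨ψ, hψ⟩ := hse.lift φ (h.2.2.1 X hX C hC _)
  rw [← hψ, h.2.2.1 X hX B hB ψ, zero_comp]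

lemma zero_mem_left (h : IsTorsionPair A T F) : (0 : A) ∈ T :=
  mem_left_of h _ (fun Y _ f => (isZero_zero A).eq_of_src f 0)

lemma zero_mem_right (h : IsTorsionPair A T F) : (0 : A) ∈ F :=
  mem_right_of h _ (fun X _ f => (isZero_zero A).eq_of_tgt f 0)

lemma mem_star_of_left {X Y : Set A} {M : A} (h0 : (0 : A) ∈ Y) (hM : M ∈ X) :
    M ∈ star A X Y :=
  ⟨M, 0, (Iso.refl M).hom, 0, isSES_of_iso (Iso.refl M), hM, h0⟩

lemma mem_star_of_right {X Y : Set A} {M : A} (h0 : (0 : A) ∈ X) (hM : M ∈ Y) :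
    M ∈ star A X Y :=
  ⟨0, M, 0, (Iso.refl M).hom, isSES_of_iso' (Iso.refl M), h0, hM⟩

lemma star_isoClosed (X Y : Set A) : IsoClosed A (star A X Y) := by
  rintro M M' e ⟨B, C, f, g, hse, hB, hC⟩
  exact ⟨B, C, f ≫ e.hom, e.inv ≫ g, hse.iso_mid e, hB, hC⟩

lemma star_mono_left {X Y Y' : Set A} (h : Y ⊆ Y') : star A X Y ⊆ star A X Y' := by
  rintro M ⟨B, C, f, g, hse, hB, hC⟩
  exact ⟨B, C, f, g, hse, hB, h hC⟩

lemma star_mono_right {X X' Y : Set A} (h : X ⊆ X') : star A X Y ⊆ star A X' Y := by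
  rintro M ⟨B, C, f, g, hse, hB, hC⟩
  exact ⟨B, C, f, g, hse, h hB, hC⟩

end TP

section Chase
open CategoryTheory.Abelian Pseudoelement
variable {A : Type u} [Category.{v} A] [Abelian A]

/-- Given short exact sequences `U → T → W` and `X₀ → W → Y₀`, the kernel `P` of the
composite `T → W → Y₀` fits in a short exact sequence `U → P → X₀`. -/
lemma ker_comp_ses {U T W X₀ Y₀ : A} (u : U ⟶ T) (a : T ⟶ W) (m : X₀ ⟶ W) (b : W ⟶ Y₀)
    (hU : IsSES A u a) (hX : IsSES A m b) :
    ∃ (j : U ⟶ kernel (a ≫ b)) (q : kernel (a ≫ b) ⟶ X₀),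
      IsSES A j q ∧ j ≫ kernel.ι (a ≫ b) = u ∧ q ≫ m = kernel.ι (a ≫ b) ≫ a := by
  have ha : Epi a := hU.epi
  have hb : Epi b := hX.epi
  have hm : Mono m := hX.mono
  have hab : Epi (a ≫ b) := epi_comp a b
  set ι := kernel.ι (a ≫ b) with hι
  have hkerses : IsSES A ι (a ≫ b) := ses_kernel (a ≫ b)
  have hu0 : u ≫ (a ≫ b) = 0 := by rw [reassoc_of% hU.w, zero_comp]
  set j := kernel.lift (a ≫ b) u hu0 with hjdef
  obtain ⟨q, hq⟩ := hX.lift (ι ≫ a) (by rw [Category.assoc, kernel.condition])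
  have hjι : j ≫ ι = u := by simp [hjdef, hι]
  have hjmono : Mono j := by
    have : Mono (j ≫ ι) := by rw [hjι]; exact hU.mono
    exact mono_of_mono _ ι
  have hqepi : Epi q := by
    apply epi_of_pseudo_surjective
    intro x₀
    obtain ⟨t, ht⟩ := pseudo_surjective_of_epi a (m x₀)
    have h1 : (a ≫ b) t = 0 := by
      rw [Pseudoelement.comp_apply, ht, ← Pseudoelement.comp_apply, hX.w, Pseudoelement.zero_apply]
    obtain ⟨p, hp⟩ := pseudo_exact_of_exact (S := ShortComplex.mk ι (a ≫ b)
      (kernel.condition _)) hkerses.2.exact t h1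
    refine ⟨p, pseudo_injective_of_mono m ?_⟩
    rw [← Pseudoelement.comp_apply, hq, Pseudoelement.comp_apply,
      show pseudoApply ι p = t from hp, ht]
  have hw : j ≫ q = 0 := by
    rw [← cancel_mono m, Category.assoc, hq, zero_comp, ← Category.assoc, hjι, hU.w]
  refine ⟨j, q, ⟨hw, ShortComplex.ShortExact.mk' ?_ hjmono hqepi⟩, hjι, hq⟩
  apply exact_of_pseudo_exact
  intro x hx
  have h2 : a (ι x) = 0 := by
    have hmq : m (q x) = 0 := by rw [hx, apply_zero]
    rwa [← Pseudoelement.comp_apply, hq, Pseudoelement.comp_apply] at hmq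
  obtain ⟨y, hy⟩ := pseudo_exact_of_exact (S := ShortComplex.mk u a hU.w)
    hU.2.exact (ι x) h2
  refine ⟨y, pseudo_injective_of_mono ι ?_⟩
  rw [← Pseudoelement.comp_apply, hjι]
  exact hy

/-- Given short exact sequences `P → T → Y₀` and `T → M → V`, the cokernel `Q` of the
composite `P → T → M` fits in a short exact sequence `Y₀ → Q → V`. -/
lemma quot_ses {P T M Y₀ V : A} (i : P ⟶ T) (p : T ⟶ Y₀) (k : T ⟶ M) (g : M ⟶ V)
    (hP : IsSES A i p) (hT : IsSES A k g) :
    ∃ (s : Y₀ ⟶ cokernel (i ≫ k)) (r : cokernel (i ≫ k) ⟶ V), IsSES A s r := by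
  have hi : Mono i := hP.mono
  have hk : Mono k := hT.mono
  have hp : Epi p := hP.epi
  have hg : Epi g := hT.epi
  have hik : Mono (i ≫ k) := mono_comp i k
  set π := cokernel.π (i ≫ k) with hπ
  have hcokses : IsSES A (i ≫ k) π := ses_cokernel (i ≫ k)
  obtain ⟨s, hs⟩ := hP.desc (k ≫ π) (by rw [← Category.assoc, cokernel.condition])
  have hr0 : (i ≫ k) ≫ g = 0 := by rw [Category.assoc, hT.w, comp_zero]
  set r := cokernel.desc (i ≫ k) g hr0 with hrdef
  have hπr : π ≫ r = g := cokernel.π_desc _ _ _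
  have hw : s ≫ r = 0 := by
    rw [← cancel_epi p, ← Category.assoc, hs, Category.assoc, hπr, hT.w, comp_zero]
  have hrepi : Epi r := by
    have : Epi (π ≫ r) := by rw [hπr]; exact hg
    exact epi_of_epi π _
  have hsmono : Mono s := by
    apply mono_of_zero_of_map_zero
    intro y hy
    obtain ⟨t, ht⟩ := pseudo_surjective_of_epi p y
    have h1 : π (k t) = 0 := by
      rw [← Pseudoelement.comp_apply, ← hs, Pseudoelement.comp_apply, ht, hy]
    obtain ⟨x, hx⟩ := pseudo_exact_of_exact (S := ShortComplex.mk (i ≫ k) π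
      (cokernel.condition _)) hcokses.2.exact (k t) h1
    have hix : i x = t := by
      apply pseudo_injective_of_mono k
      rw [← Pseudoelement.comp_apply]
      exact hx
    rw [← ht, ← hix, ← Pseudoelement.comp_apply, hP.w, Pseudoelement.zero_apply]
  refine ⟨s, r, hw, ShortComplex.ShortExact.mk' ?_ hsmono hrepi⟩
  apply exact_of_pseudo_exact
  intro y' hy'
  obtain ⟨me, hme⟩ := pseudo_surjective_of_epi π y'
  have h2 : g me = 0 := by rw [← hπr, Pseudoelement.comp_apply, hme, hy']
  obtain ⟨t, ht⟩ := pseudo_exact_of_exact (S := ShortComplex.mk k g hT.w)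
    hT.2.exact me h2
  refine ⟨p t, ?_⟩
  rw [← Pseudoelement.comp_apply, hs, Pseudoelement.comp_apply,
    show pseudoApply k t = me from ht, hme]

end Chase

section Main
variable {A : Type u} [Category.{v} A] [Abelian A]

lemma zero_mem_pairIn {H X Y : Set A} (h : IsTorsionPairIn A H X Y) (h0 : (0 : A) ∈ H) :
    (0 : A) ∈ X ∧ (0 : A) ∈ Y := by
  obtain ⟨B, C, f, g, ⟨w, hse⟩, hB, hC⟩ := h.2.2.2.2.2 0 h0
  have hf : f = 0 := (isZero_zero A).eq_of_tgt f 0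
  have hg : g = 0 := (isZero_zero A).eq_of_src g 0
  have := hse.mono_f
  have := hse.epi_g
  have hB0 : IsZero B := by
    rw [IsZero.iff_id_eq_zero, ← cancel_mono f, hf, comp_zero, zero_comp]
  have hC0 : IsZero C := by
    rw [IsZero.iff_id_eq_zero, ← cancel_epi g, hg, comp_zero, zero_comp]
  exact ⟨h.2.2.1 hB0.isoZero hB, h.2.2.2.1 hC0.isoZero hC⟩

end Main

variable {A : Type u} [Category.{v} A] [Abelian A]

theorem stmt13' (T₁ F₁ T₂ F₂ : Set A)
    (h₁ : IsTorsionPair A T₁ F₁) (h₂ : IsTorsionPair A T₂ F₂) (h12 : T₁ ⊆ T₂) :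
    (∀ T F : Set A, IsTorsionPair A T F → T₁ ⊆ T → T ⊆ T₂ →
      IsTorsionPairIn A (T₂ ∩ F₁) (T ∩ F₁) (T₂ ∩ F)) ∧
    (∀ X Y : Set A, IsTorsionPairIn A (T₂ ∩ F₁) X Y →
      IsTorsionPair A (star A T₁ X) (star A Y F₂) ∧
        T₁ ⊆ star A T₁ X ∧ star A T₁ X ⊆ T₂) ∧
    (∀ T F : Set A, IsTorsionPair A T F → T₁ ⊆ T → T ⊆ T₂ →
      star A T₁ (T ∩ F₁) = T ∧ star A (T₂ ∩ F) F₂ = F) ∧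
    (∀ X Y : Set A, IsTorsionPairIn A (T₂ ∩ F₁) X Y →
      (star A T₁ X) ∩ F₁ = X ∧ T₂ ∩ (star A Y F₂) = Y) ∧
    (∀ T T' : Set A, T ⊆ T' → T ∩ F₁ ⊆ T' ∩ F₁) ∧
    (∀ X X' : Set A, X ⊆ X' → star A T₁ X ⊆ star A T₁ X') := by
  have hF21 : F₂ ⊆ F₁ := fun V hV =>
    mem_right_of h₁ V (fun X hX f => h₂.2.2.1 X (h12 hX) V hV f)
  have h0H : (0 : A) ∈ T₂ ∩ F₁ := ⟨zero_mem_left h₂, zero_mem_right h₁⟩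
  refine ⟨?_, ?_, ?_, ?_, ?_, ?_⟩
  · -- Φ well defined
    intro T F hTF hT₁T hTT₂
    have hFF₁ : F ⊆ F₁ := fun V hV =>
      mem_right_of h₁ V (fun X hX f => hTF.2.2.1 X (hT₁T hX) V hV f)
    refine ⟨fun M hM => ⟨hTT₂ hM.1, hM.2⟩, fun M hM => ⟨hM.1, hFF₁ hM.2⟩,
      fun X Y e hX => ⟨hTF.1 e hX.1, h₁.2.1 e hX.2⟩,
      fun X Y e hX => ⟨h₂.1 e hX.1, hTF.2.1 e hX.2⟩,
      fun B hB C hC f => hTF.2.2.1 B hB.1 C hC.2 f, ?_⟩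
    intro H₀ hH₀
    obtain ⟨B, C, f, g, hse, hB, hC⟩ := hTF.2.2.2 H₀
    have := hse.mono
    have := hse.epi
    exact ⟨B, C, f, g, hse, ⟨hB, right_sub h₁ f hH₀.2⟩, ⟨left_quot h₂ g hH₀.1, hC⟩⟩
  · -- Ψ well defined
    intro X Y hXY
    obtain ⟨h0X, h0Y⟩ := zero_mem_pairIn hXY h0H
    refine ⟨⟨star_isoClosed _ _, star_isoClosed _ _, ?_, ?_⟩,
      fun M hM => mem_star_of_left h0X hM, ?_⟩
    · -- Hom vanishing
      rintro M ⟨U, X₀, f₁, g₁, hse₁, hU, hX₀⟩ N ⟨Y₀, V, f₂, g₂, hse₂, hY₀, hV⟩ φ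
      have h1 : f₁ ≫ (φ ≫ g₂) = 0 := h₂.2.2.1 U (h12 hU) V hV _
      obtain ⟨χ, hχ⟩ := hse₁.desc (φ ≫ g₂) h1
      have hχ0 : χ = 0 := h₂.2.2.1 X₀ (hXY.1 hX₀).1 V hV χ
      have hφg : φ ≫ g₂ = 0 := by rw [← hχ, hχ0, comp_zero]
      obtain ⟨ψ, hψ⟩ := hse₂.lift φ hφg
      have h2 : f₁ ≫ ψ = 0 := h₁.2.2.1 U hU Y₀ (hXY.2.1 hY₀).2 _
      obtain ⟨χ', hχ'⟩ := hse₁.desc ψ h2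
      have hχ'0 : χ' = 0 := hXY.2.2.2.2.1 X₀ hX₀ Y₀ hY₀ χ'
      rw [← hψ, ← hχ', hχ'0, comp_zero, zero_comp]
    · -- decompositions exist
      intro M
      obtain ⟨T, V, k, g, hseT, hTT₂, hV⟩ := h₂.2.2.2 M
      obtain ⟨U, W, u, a, hseU, hU, hW⟩ := h₁.2.2.2 T
      have : Epi a := hseU.epi
      have hWH : W ∈ T₂ ∩ F₁ := ⟨left_quot h₂ a hTT₂, hW⟩
      obtain ⟨X₀, Y₀, m, b, hseX, hX₀, hY₀⟩ := hXY.2.2.2.2.2 W hWH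
      have : Epi b := hseX.epi
      have hEpiab : Epi (a ≫ b) := epi_comp a b
      obtain ⟨j, q, hsePj, hji, hqm⟩ := ker_comp_ses u a m b hseU hseX
      obtain ⟨s, r, hseQ⟩ := quot_ses (kernel.ι (a ≫ b)) (a ≫ b) k g (ses_kernel _) hseT
      have : Mono (kernel.ι (a ≫ b)) := inferInstance
      have : Mono k := hseT.mono
      have : Mono (kernel.ι (a ≫ b) ≫ k) := mono_comp _ _
      exact ⟨kernel (a ≫ b), cokernel (kernel.ι (a ≫ b) ≫ k), _, _, ses_cokernel _,
        ⟨U, X₀, j, q, hsePj, hU, hX₀⟩, ⟨Y₀, V, s, r, hseQ, hY₀, hV⟩⟩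
    · -- star T₁ X ⊆ T₂
      rintro M ⟨B, C, f, g, hse, hB, hC⟩
      exact left_ext h₂ hse (h12 hB) (hXY.1 hC).1
  · -- Ψ ∘ Φ = id
    intro T F hTF hT₁T hTT₂
    refine ⟨Set.Subset.antisymm ?_ ?_, Set.Subset.antisymm ?_ ?_⟩
    · rintro M ⟨U, X₀, f, g, hse, hU, hX₀⟩
      exact left_ext hTF hse (hT₁T hU) hX₀.1
    · intro M hM
      obtain ⟨U, W, u, a, hse, hU, hW⟩ := h₁.2.2.2 M
      have : Epi a := hse.epi
      exact ⟨U, W, u, a, hse, hU, ⟨left_quot hTF a hM, hW⟩⟩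
    · rintro M ⟨Y₀, V, f, g, hse, hY₀, hV⟩
      have hVF : V ∈ F := mem_right_of hTF V (fun X hX f' => h₂.2.2.1 X (hTT₂ hX) V hV f')
      exact right_ext hTF hse hY₀.2 hVF
    · intro M hM
      obtain ⟨T', V, k, g, hse, hT', hV⟩ := h₂.2.2.2 M
      have : Mono k := hse.mono
      exact ⟨T', V, k, g, hse, ⟨hT', right_sub hTF k hM⟩, hV⟩
  · -- Φ ∘ Ψ = id
    intro X Y hXY
    refine ⟨Set.Subset.antisymm ?_ ?_, Set.Subset.antisymm ?_ ?_⟩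
    · rintro M ⟨⟨U, X₀, f, g, ⟨w, hse⟩, hU, hX₀⟩, hMF₁⟩
      have hf : f = 0 := h₁.2.2.1 U hU M hMF₁ f
      have : Mono g := hse.exact.mono_g hf
      have := hse.epi_g
      have : IsIso g := isIso_of_mono_of_epi g
      exact hXY.2.2.1 (asIso g).symm hX₀
    · intro M hM
      exact ⟨mem_star_of_right (zero_mem_left h₁) hM, (hXY.1 hM).2⟩
    · rintro M ⟨hMT₂, ⟨Y₀, V, f, g, ⟨w, hse⟩, hY₀, hV⟩⟩
      have hg : g = 0 := h₂.2.2.1 M hMT₂ V hV g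
      have : Epi f := hse.exact.epi_f hg
      have := hse.mono_f
      have : IsIso f := isIso_of_mono_of_epi f
      exact hXY.2.2.2.1 (asIso f) hY₀
    · intro M hM
      exact ⟨(hXY.2.1 hM).1, mem_star_of_left (zero_mem_right h₂) hM⟩
  · exact fun T T' h M hM => ⟨h hM.1, hM.2⟩
  · exact fun X X' h => star_mono_left h

variable (A)

/-- the bijection for intervals of torsion pairs in an abelian category.
Let `t₁ = (T₁, F₁) ≤ t₂ = (T₂, F₂)` be torsion pairs in `A` and `H = T₂ ∩ F₁`.  Then
`Φ(T, F) = (T ∩ F₁, T₂ ∩ F)` and `Ψ(X, Y) = (T₁ ∗ X, Y ∗ F₂)` are mutually inverse,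
order-preserving bijections between the torsion pairs `(T, F)` in `A` with `T₁ ⊆ T ⊆ T₂`
and the torsion pairs in `H`. -/
theorem stmt13 (T₁ F₁ T₂ F₂ : Set A)
    (h₁ : IsTorsionPair A T₁ F₁) (h₂ : IsTorsionPair A T₂ F₂) (h12 : T₁ ⊆ T₂) :
    -- `Φ` is well defined
    (∀ T F : Set A, IsTorsionPair A T F → T₁ ⊆ T → T ⊆ T₂ →
      IsTorsionPairIn A (T₂ ∩ F₁) (T ∩ F₁) (T₂ ∩ F)) ∧
    -- `Ψ` is well defined
    (∀ X Y : Set A, IsTorsionPairIn A (T₂ ∩ F₁) X Y →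
      IsTorsionPair A (star A T₁ X) (star A Y F₂) ∧
        T₁ ⊆ star A T₁ X ∧ star A T₁ X ⊆ T₂) ∧
    -- `Ψ ∘ Φ = id`
    (∀ T F : Set A, IsTorsionPair A T F → T₁ ⊆ T → T ⊆ T₂ →
      star A T₁ (T ∩ F₁) = T ∧ star A (T₂ ∩ F) F₂ = F) ∧
    -- `Φ ∘ Ψ = id`
    (∀ X Y : Set A, IsTorsionPairIn A (T₂ ∩ F₁) X Y →
      (star A T₁ X) ∩ F₁ = X ∧ T₂ ∩ (star A Y F₂) = Y) ∧
    -- `Φ` is order-preserving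
    (∀ T T' : Set A, T ⊆ T' → T ∩ F₁ ⊆ T' ∩ F₁) ∧
    -- `Ψ` is order-preserving
    (∀ X X' : Set A, X ⊆ X' → star A T₁ X ⊆ star A T₁ X') := by
  exact stmt13' T₁ F₁ T₂ F₂ h₁ h₂ h12
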